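/- Let p be an odd prime with 2 a primitive root modulo p. Let x ∈ 𝔽₂^p be nonzero with ∑_{i∈ℤ_p} x_i = 0, and let φ : 𝔽₂^p → 𝔽₂^p be the linear map φ = ∑_{i∈ℤ_p} x_i σ^i, where σ is the cyclic coordinate shift by one. Then the kernel of φ is the one-dimensional subspace spanned by the all-ones vector ∑_{i∈ℤ_p} e_i. -/

import Mathlib

open Finset


/-- The cyclic coordinate shift by `j` as a linear map on `𝔽₂^p`. -/
def shiftMap (p : ℕ) (j : ZMod p) :
    (ZMod p → ZMod 2) →ₗ[ZMod 2] (ZMod p → ZMod 2) where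
  toFun y := fun i => y (i - j)
  map_add' _ _ := rfl
  map_smul' _ _ := rfl

section Helpers

open Polynomial

/-- Irreducibility of the p-th cyclotomic polynomial over 𝔽₂ when 2 is a primitive root. -/
lemma cyclotomic_irreducible_zmod2 (p : ℕ) [hp : Fact p.Prime] (hodd : Odd p)
    (horder : orderOf (2 : ZMod p) = p - 1) :
    Irreducible (cyclotomic p (ZMod 2)) := by
  have hp2 : 2 < p := by
    rcases hp.out.two_le.lt_or_eq with h | h
    · exact h
    · exfalso; rw [← h] at hodd; exact (Nat.not_odd_iff_even.mpr even_two) hodd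
  set Φ := cyclotomic p (ZMod 2) with hΦ
  have hmonic : Φ.Monic := cyclotomic.monic p _
  have hΦdeg : Φ.natDegree = p - 1 := by
    rw [hΦ, natDegree_cyclotomic, Nat.totient_prime hp.out]
  have hΦne : Φ ≠ 0 := hmonic.ne_zero
  have hΦeval1 : Φ.eval 1 = 1 := by
    rw [hΦ, eval_one_cyclotomic_prime]
    have : (p : ZMod 2) = ((p % 2 : ℕ) : ZMod 2) := by
      rw [ZMod.natCast_mod]
    rw [this, Nat.odd_iff.mp hodd, Nat.cast_one]
  have hΦnotunit : ¬ IsUnit Φ := by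
    intro h
    have := natDegree_eq_zero_of_isUnit h
    omega
  obtain ⟨ψ', hψ'irr, hψ'dvd⟩ := WfDvdMonoid.exists_irreducible_factor hΦnotunit hΦne
  have hψ'ne : ψ' ≠ 0 := hψ'irr.ne_zero
  set ψ := normalize ψ' with hψdef
  have hψmonic : ψ.Monic := monic_normalize hψ'ne
  have hψirr : Irreducible ψ := (normalize_associated ψ').symm.irreducible hψ'irr
  have hψdvd : ψ ∣ Φ := (normalize_dvd_iff).mpr hψ'dvd
  -- the field F = 𝔽₂[X]/(ψ)
  haveI : Fact (Irreducible ψ) := ⟨hψirr⟩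
  set F := AdjoinRoot ψ with hF
  haveI : FiniteDimensional (ZMod 2) F := PowerBasis.finite (AdjoinRoot.powerBasis hψmonic.ne_zero)
  haveI : Finite F := Module.finite_of_finite (ZMod 2)
  haveI : Fintype F := Fintype.ofFinite F
  set d := ψ.natDegree with hd
  have hrank : Module.finrank (ZMod 2) F = d := by
    rw [(AdjoinRoot.powerBasis hψmonic.ne_zero).finrank, AdjoinRoot.powerBasis_dim]
  have hcard : Fintype.card F = 2 ^ d := by
    rw [Module.card_eq_pow_finrank (K := ZMod 2), hrank, ZMod.card]
  -- the root ζ of ψ in F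
  set ζ : F := AdjoinRoot.root ψ with hζ
  have hψζ : (aeval ζ) ψ = 0 := AdjoinRoot.aeval_eq ψ ▸ by
    simpa using AdjoinRoot.mk_self (f := ψ)
  have hΦζ : (aeval ζ) Φ = 0 := by
    obtain ⟨c, hc⟩ := hψdvd
    rw [hc, map_mul, hψζ, zero_mul]
  have hζp : ζ ^ p = 1 := by
    have h1 : (aeval ζ) (X ^ p - 1 : (ZMod 2)[X]) = 0 := by
      obtain ⟨c, hc⟩ := cyclotomic.dvd_X_pow_sub_one (R := ZMod 2) (n := p)
      rw [hc, map_mul, hΦζ, zero_mul]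
    have := h1
    simp only [map_sub, map_pow, aeval_X, map_one, sub_eq_zero] at this
    exact this
  have hζne1 : ζ ≠ 1 := by
    intro h
    rw [h] at hΦζ
    rw [← map_one (algebraMap (ZMod 2) F), aeval_algebraMap_apply_eq_algebraMap_eval,
      hΦeval1, map_one] at hΦζ
    exact one_ne_zero hΦζ
  -- order of ζ is p
  have hζne0 : ζ ≠ 0 := by
    intro h
    rw [h, zero_pow hp.out.ne_zero] at hζp
    exact zero_ne_one hζp
  have horderζ : orderOf ζ = p := by
    have h1 : orderOf ζ ∣ p := orderOf_dvd_of_pow_eq_one hζp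
    rcases (Nat.Prime.eq_one_or_self_of_dvd hp.out _ h1) with h | h
    · exact absurd (orderOf_eq_one_iff.mp h) hζne1
    · exact h
  -- p divides 2^d - 1
  have hdvd1 : p ∣ 2 ^ d - 1 := by
    have hu : orderOf (Units.mk0 ζ hζne0) = p := by
      rw [← horderζ]; exact orderOf_units (y := Units.mk0 ζ hζne0) ▸ rfl
    have h2 : orderOf (Units.mk0 ζ hζne0) ∣ Fintype.card Fˣ := orderOf_dvd_card
    rw [hu, Fintype.card_units, hcard] at h2
    exact h2
  -- hence (p-1) ∣ d
  have hpd : (p - 1) ∣ d := by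
    rw [← horder]
    apply orderOf_dvd_of_pow_eq_one
    have h1 : ((2 ^ d - 1 : ℕ) : ZMod p) = 0 := (ZMod.natCast_eq_zero_iff _ _).mpr hdvd1
    have h2 : (1 : ℕ) ≤ 2 ^ d := Nat.one_le_two_pow
    have : ((2 ^ d : ℕ) : ZMod p) = ((2 ^ d - 1 : ℕ) : ZMod p) + 1 := by
      rw [← Nat.cast_one (R := ZMod p), ← Nat.cast_add, Nat.sub_add_cancel h2]
    rw [h1, zero_add] at this
    rw [← Nat.cast_ofNat, ← Nat.cast_pow]
    exact this
  -- and d ≤ p - 1, so d = p - 1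
  have hdle : d ≤ p - 1 := hΦdeg ▸ natDegree_le_of_dvd hψdvd hΦne
  have hd0 : 0 < d := hψirr.natDegree_pos
  have hdeq : d = p - 1 := Nat.le_antisymm hdle (Nat.le_of_dvd hd0 hpd)
  -- conclude ψ = Φ
  have hψΦ : ψ = Φ := by
    obtain ⟨c, hc⟩ := hψdvd
    have hcne : c ≠ 0 := by
      intro h; rw [h, mul_zero] at hc; exact hΦne hc
    have hcdeg : c.natDegree = 0 := by
      have := natDegree_mul (hψmonic.ne_zero) hcne
      rw [← hc, hΦdeg, ← hd, hdeq] at this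
      omega
    obtain ⟨a, ha⟩ := natDegree_eq_zero.mp hcdeg
    have ha1 : a = 1 := by
      have := hmonic
      rw [hc, ← ha] at this
      have h2 := this.leadingCoeff
      rw [leadingCoeff_mul, hψmonic.leadingCoeff, one_mul, leadingCoeff_C] at h2
      exact h2
    rw [hc, ← ha, ha1, map_one, mul_one]
  rw [← hψΦ]
  exact hψirr

variable (p : ℕ) [Fact p.Prime]

/-- encode a vector as a polynomial of degree `< p` -/
noncomputable def Pz (z : ZMod p → ZMod 2) : (ZMod 2)[X] :=
  ∑ i : ZMod p, C (z i) * X ^ i.val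

/-- encode a vector as an element of the group algebra -/
noncomputable def Ez (z : ZMod p → ZMod 2) : AddMonoidAlgebra (ZMod 2) (ZMod p) :=
  AddMonoidAlgebra.ofCoeff (Finsupp.equivFunOnFinite.symm z)

lemma Ez_apply (z : ZMod p → ZMod 2) (j : ZMod p) : (Ez p z).coeff j = z j := rfl

lemma Ez_eq_sum (z : ZMod p → ZMod 2) :
    Ez p z = ∑ i : ZMod p, AddMonoidAlgebra.single i (z i) := by
  ext j
  rw [Ez_apply]
  rw [AddMonoidAlgebra.coeff_sum, Finsupp.finset_sum_apply]
  simp_rw [AddMonoidAlgebra.coeff_single, Finsupp.single_apply]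
  rw [Finset.sum_ite_eq' (Finset.univ) j (fun i => z i)]
  simp

lemma Ez_mul (x y : ZMod p → ZMod 2) (j : ZMod p) :
    (Ez p x * Ez p y).coeff j = ∑ i : ZMod p, x i * y (j - i) := by
  rw [Ez_eq_sum, Ez_eq_sum, Finset.sum_mul_sum]
  simp_rw [AddMonoidAlgebra.single_mul_single]
  rw [AddMonoidAlgebra.coeff_sum, Finsupp.finset_sum_apply]
  refine Finset.sum_congr rfl fun i _ => ?_
  rw [AddMonoidAlgebra.coeff_sum, Finsupp.finset_sum_apply]
  simp only [AddMonoidAlgebra.coeff_single, Finsupp.single_apply]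
  rw [Finset.sum_eq_single (j - i)]
  · simp
  · intro k _ hk
    rw [if_neg]
    intro h
    exact hk (by rw [← h]; ring)
  · intro h; exact absurd (Finset.mem_univ _) h

noncomputable def psi : (ZMod 2)[X] →ₐ[ZMod 2] AddMonoidAlgebra (ZMod 2) (ZMod p) :=
  aeval (AddMonoidAlgebra.single (1 : ZMod p) (1 : ZMod 2))

lemma psi_Pz (z : ZMod p → ZMod 2) : psi p (Pz p z) = Ez p z := by
  rw [Pz, map_sum, Ez_eq_sum]
  congr 1
  ext i
  have halg : (algebraMap (ZMod 2) (AddMonoidAlgebra (ZMod 2) (ZMod p))) (z i)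
      = AddMonoidAlgebra.single 0 (z i) := by
    simp [AddMonoidAlgebra.coe_algebraMap]
  rw [map_mul, map_pow, psi, aeval_C, aeval_X, AddMonoidAlgebra.single_pow,
    one_pow, halg, AddMonoidAlgebra.single_mul_single, zero_add, mul_one]
  congr 1
  rw [nsmul_eq_mul, mul_one, ZMod.natCast_zmod_val]

lemma psi_Xp_sub_one : psi p (X ^ p - 1) = 0 := by
  rw [map_sub, map_pow, map_one, psi, aeval_X, AddMonoidAlgebra.single_pow, one_pow]
  have h1 : (p : ℕ) • (1 : ZMod p) = 0 := by
    rw [nsmul_eq_mul, mul_one, ZMod.natCast_self]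
  rw [h1]
  rw [sub_eq_zero]
  rfl

lemma Ez_injective : Function.Injective (Ez p) :=
  fun _ _ h => Finsupp.equivFunOnFinite.symm.injective (AddMonoidAlgebra.ofCoeff_injective h)

lemma Pz_degree_lt (z : ZMod p → ZMod 2) : (Pz p z).degree < (p : ℕ) := by
  apply lt_of_le_of_lt (degree_sum_le _ _)
  rw [Finset.sup_lt_iff]
  · intro i _
    apply lt_of_le_of_lt (degree_C_mul_X_pow_le _ _)
    exact_mod_cast Nat.cast_lt.mpr (ZMod.val_lt i)
  · exact WithBot.bot_lt_coe _

lemma Pz_coeff (z : ZMod p → ZMod 2) (n : ℕ) (hn : n < p) : (Pz p z).coeff n = z n := by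
  rw [Pz, finset_sum_coeff]
  simp only [coeff_C_mul, coeff_X_pow]
  have : ∀ i : ZMod p, (if n = i.val then z i else 0) = (if i = (n : ZMod p) then z i else 0) := by
    intro i
    congr 1
    rw [eq_iff_iff]
    constructor
    · intro h
      rw [← ZMod.natCast_zmod_val i, h]
    · intro h
      rw [h, ZMod.val_cast_of_lt hn]
  calc ∑ i : ZMod p, z i * (if n = i.val then 1 else 0)
      = ∑ i : ZMod p, (if i = (n : ZMod p) then z i else 0) := by
        refine Finset.sum_congr rfl fun i _ => ?_
        rw [mul_ite, mul_one, mul_zero, this i]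
    _ = z n := by rw [Finset.sum_ite_eq' Finset.univ ((n : ℕ) : ZMod p) (fun i => z i)]; simp

lemma Pz_eq_of_degree_lt (r : (ZMod 2)[X]) (hr : r.degree < (p : ℕ)) :
    Pz p (fun i => r.coeff i.val) = r := by
  ext n
  by_cases hn : n < p
  · rw [Pz_coeff p _ n hn, ZMod.val_cast_of_lt hn]
  · rw [coeff_eq_zero_of_degree_lt (lt_of_lt_of_le hr (by exact_mod_cast Nat.le_of_not_lt hn)),
      coeff_eq_zero_of_degree_lt (lt_of_lt_of_le (Pz_degree_lt p _) (by exact_mod_cast Nat.le_of_not_lt hn))]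

lemma psi_ker (q : (ZMod 2)[X]) (hq : psi p q = 0) : (X ^ p - 1 : (ZMod 2)[X]) ∣ q := by
  have hmonic : (X ^ p - 1 : (ZMod 2)[X]).Monic := monic_X_pow_sub_C 1 (Fact.out : p.Prime).ne_zero
  have hdm := modByMonic_add_div q (X ^ p - 1)
  set r := q %ₘ (X ^ p - 1) with hrdef
  have hdeg : r.degree < (p : ℕ) := by
    have h := degree_modByMonic_lt q hmonic
    have h2 : (X ^ p - 1 : (ZMod 2)[X]).degree = (p : ℕ) := by
      rw [show (1 : (ZMod 2)[X]) = C 1 from (map_one C).symm,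
        degree_X_pow_sub_C (Fact.out : p.Prime).pos]
    rwa [h2] at h
  have hψr : psi p r = 0 := by
    have : psi p q = psi p r + psi p (X ^ p - 1) * psi p (q /ₘ (X ^ p - 1)) := by
      rw [← map_mul, ← map_add, hdm]
    rw [hq, psi_Xp_sub_one, zero_mul, add_zero] at this
    exact this.symm
  have hr0 : r = 0 := by
    rw [← Pz_eq_of_degree_lt p r hdeg] at hψr ⊢
    rw [psi_Pz] at hψr
    have h0 : Ez p (fun i => r.coeff i.val) = Ez p 0 := by
      rw [hψr]
      ext j
      simp [Ez_apply]
    have := Ez_injective p h0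
    rw [this]
    simp [Pz]
  rw [← hdm, hr0, zero_add]
  exact Dvd.intro _ rfl

lemma Pz_injective : Function.Injective (Pz p) := by
  intro z w h
  apply Ez_injective p
  rw [← psi_Pz, ← psi_Pz, h]

lemma Pz_allones : Pz p (fun _ => 1) = cyclotomic p (ZMod 2) := by
  rw [cyclotomic_prime, Pz]
  simp only [map_one, one_mul]
  apply Finset.sum_nbij' (fun (i : ZMod p) => i.val) (fun n => (n : ZMod p))
  · intro i _; exact Finset.mem_range.mpr (ZMod.val_lt i)
  · intro n _; exact Finset.mem_univ _
  · intro i _; exact ZMod.natCast_zmod_val i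
  · intro n hn; exact ZMod.val_cast_of_lt (Finset.mem_range.mp hn)
  · intro i _; rfl

lemma Pz_eval_one (z : ZMod p → ZMod 2) : eval 1 (Pz p z) = ∑ i, z i := by
  rw [Pz, eval_finset_sum]
  simp

lemma dvd_Pz_eq (z : ZMod p → ZMod 2) (hz : Pz p z ≠ 0)
    (hdvd : cyclotomic p (ZMod 2) ∣ Pz p z) : Pz p z = cyclotomic p (ZMod 2) := by
  have hp1 : 1 ≤ p := (Fact.out : p.Prime).pos
  have hΦdeg : (cyclotomic p (ZMod 2)).natDegree = p - 1 := by
    rw [natDegree_cyclotomic, Nat.totient_prime Fact.out]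
  have hΦne : cyclotomic p (ZMod 2) ≠ 0 := (cyclotomic.monic p _).ne_zero
  obtain ⟨c, hc⟩ := hdvd
  have hcne : c ≠ 0 := fun h => hz (by rw [hc, h, mul_zero])
  have hdegz : (Pz p z).natDegree ≤ p - 1 := by
    have h1 := Pz_degree_lt p z
    have h2 : (Pz p z).natDegree < p := (natDegree_lt_iff_degree_lt hz).mpr (by exact_mod_cast h1)
    omega
  have hdc : c.natDegree = 0 := by
    have h3 := natDegree_mul hΦne hcne
    rw [← hc, hΦdeg] at h3
    omega
  obtain ⟨a, ha⟩ := natDegree_eq_zero.mp hdc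
  have ha0 : a ≠ 0 := fun h => hcne (by rw [← ha, h, map_zero])
  have ha1 : a = 1 := by
    have hall : ∀ b : ZMod 2, b ≠ 0 → b = 1 := by decide
    exact hall a ha0
  rw [hc, ← ha, ha1, map_one, mul_one]

end Helpers

/-- If `2` is a primitive root mod the odd prime `p` and `x ≠ 0` has even weight,
then the kernel of `φ = ∑ i, x i • σ^i` is spanned by the all-ones vector. -/
theorem ker_shift_poly_eq_span_allOnes (p : ℕ) [Fact p.Prime] (hodd : Odd p)
    (horder : orderOf (2 : ZMod p) = p - 1)
    (x : ZMod p → ZMod 2) (hx0 : x ≠ 0) (hxsum : ∑ i, x i = 0) :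
    LinearMap.ker (∑ i : ZMod p, x i • shiftMap p i) =
      Submodule.span (ZMod 2) {(fun _ => 1 : ZMod p → ZMod 2)} := by
  have hΦirr := cyclotomic_irreducible_zmod2 p hodd horder
  have hΦprime : Prime (Polynomial.cyclotomic p (ZMod 2)) :=
    UniqueFactorizationMonoid.irreducible_iff_prime.mp hΦirr
  have hΦeval1 : (Polynomial.cyclotomic p (ZMod 2)).eval 1 = 1 := by
    rw [Polynomial.eval_one_cyclotomic_prime]
    have : (p : ZMod 2) = ((p % 2 : ℕ) : ZMod 2) := by rw [ZMod.natCast_mod]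
    rw [this, Nat.odd_iff.mp hodd, Nat.cast_one]
  have happ : ∀ w : ZMod p → ZMod 2,
      (∑ i : ZMod p, x i • shiftMap p i) w = fun j => ∑ i : ZMod p, x i * w (j - i) := by
    intro w
    funext j
    rw [LinearMap.sum_apply, Finset.sum_apply]
    rfl
  ext y
  simp only [LinearMap.mem_ker, Submodule.mem_span_singleton]
  constructor
  · intro hy
    rw [happ y] at hy
    have hconv : ∀ j, ∑ i : ZMod p, x i * y (j - i) = 0 := fun j => congrFun hy j
    have hEz : Ez p x * Ez p y = 0 := by
      ext j
      rw [Ez_mul p x y j, hconv j]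
      simp
    have hpsi : psi p (Pz p x * Pz p y) = 0 := by
      rw [map_mul, psi_Pz, psi_Pz, hEz]
    have hXdvd := psi_ker p _ hpsi
    have hΦdvd : Polynomial.cyclotomic p (ZMod 2) ∣ Pz p x * Pz p y :=
      dvd_trans (Polynomial.cyclotomic.dvd_X_pow_sub_one (R := ZMod 2) (n := p)) hXdvd
    have hPz0 : Pz p (0 : ZMod p → ZMod 2) = 0 := by simp [Pz]
    have hPx0 : Pz p x ≠ 0 := fun h => hx0 (Pz_injective p (h.trans hPz0.symm))
    have hΦx : ¬ (Polynomial.cyclotomic p (ZMod 2) ∣ Pz p x) := by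
      intro hd
      have heq := dvd_Pz_eq p x hPx0 hd
      have h1 := Pz_eval_one p x
      rw [heq, hΦeval1, hxsum] at h1
      exact one_ne_zero h1
    have hΦy : Polynomial.cyclotomic p (ZMod 2) ∣ Pz p y :=
      (hΦprime.2.2 _ _ hΦdvd).resolve_left hΦx
    by_cases hy0 : y = 0
    · exact ⟨0, by rw [hy0, zero_smul]⟩
    · have hPy0 : Pz p y ≠ 0 := fun h => hy0 (Pz_injective p (h.trans hPz0.symm))
      have heq := dvd_Pz_eq p y hPy0 hΦy
      rw [← Pz_allones] at heq
      have := Pz_injective p heq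
      exact ⟨1, by rw [one_smul, ← this]⟩
  · rintro ⟨a, rfl⟩
    have h1 : (∑ i : ZMod p, x i • shiftMap p i) (fun _ => 1) = 0 := by
      rw [happ]
      funext j
      simp only [mul_one]
      rw [hxsum]
      rfl
    rw [map_smul, h1, smul_zero]
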